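/- Let k ≥ 2 be an integer and let i, j be integers with 0 ≤ i ≤ k and 0 ≤ j ≤ k. Then cos(π(i+j+2)/(k+2)) − cos(π(i−j)/(k+2)) = Σ_{c ∈ S(i,j,k)} ( cos(π(c+2)/(k+2)) − cos(π c/(k+2)) ). -/

import Mathlib

open Real Finset

/-- For integers `k ≥ 2` and `0 ≤ i, j ≤ k`, the cosine identity (4.2):
`cos(π(i+j+2)/(k+2)) − cos(π(i−j)/(k+2)) = Σ_{c ∈ S(i,j,k)}
(cos(π(c+2)/(k+2)) − cos(π c/(k+2)))`, where `S(i,j,k)` is the set of integers `c`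
with `|i−j| ≤ c ≤ i+j`, `i+j+c` even, and `i+j+c ≤ 2k`. -/
theorem stmt_1 (k i j : ℤ) (hk : 2 ≤ k) (hi0 : 0 ≤ i) (hik : i ≤ k)
    (hj0 : 0 ≤ j) (hjk : j ≤ k) :
    Real.cos (π * (i + j + 2) / (k + 2)) - Real.cos (π * (i - j) / (k + 2)) =
      ∑ c ∈ (Finset.Icc (|i - j|) (i + j)).filter
          (fun c => Even (i + j + c) ∧ i + j + c ≤ 2 * k),
        (Real.cos (π * (c + 2) / (k + 2)) - Real.cos (π * c / (k + 2))) := by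
  have had : |i - j| = i - j ∨ |i - j| = j - i := by
    rcases abs_cases (i - j) with ⟨h, _⟩ | ⟨h, _⟩
    · exact Or.inl h
    · right; omega
  set a : ℤ := |i - j| with ha
  have ha0 : 0 ≤ a := abs_nonneg _
  set b : ℤ := min (i + j) (2 * k - i - j) with hb
  set N : ℕ := ((b - a) / 2).toNat with hN
  have hbN : b = a + 2 * (N : ℤ) := by
    simp only [hN, hb]; omega
  have hset : (Finset.Icc a (i + j)).filter
      (fun c => Even (i + j + c) ∧ i + j + c ≤ 2 * k) =
      (Finset.range (N + 1)).image (fun n : ℕ => a + 2 * (n : ℤ)) := by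
    ext c
    simp only [mem_filter, mem_Icc, mem_image, mem_range, Int.even_iff]
    constructor
    · rintro ⟨⟨h1, h2⟩, h3, h4⟩
      exact ⟨((c - a) / 2).toNat, by omega, by omega⟩
    · rintro ⟨n, hn, rfl⟩
      refine ⟨⟨by omega, by omega⟩, by omega, by omega⟩
  rw [hset, Finset.sum_image (by intro x _ y _ h; beta_reduce at h; omega)]
  have key : ∀ n : ℕ, Real.cos (π * ((a + 2 * (n : ℤ)) + 2) / (k + 2)) -
      Real.cos (π * (a + 2 * (n : ℤ)) / (k + 2)) =
      Real.cos (π * (a + 2 * ((n + 1 : ℕ) : ℤ)) / (k + 2)) -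
      Real.cos (π * (a + 2 * (n : ℤ)) / (k + 2)) := by
    intro n
    congr 2
    push_cast
    ring
  calc Real.cos (π * (i + j + 2) / (k + 2)) - Real.cos (π * (i - j) / (k + 2))
      = Real.cos (π * (a + 2 * ((N + 1 : ℕ) : ℤ)) / (k + 2)) -
        Real.cos (π * (a + 2 * ((0 : ℕ) : ℤ)) / (k + 2)) := by
        have h1 : Real.cos (π * (i - j) / (k + 2)) =
            Real.cos (π * (a + 2 * ((0 : ℕ) : ℤ)) / (k + 2)) := by
          rcases had with h | h
          · rw [h]; push_cast; ring_nf
          · rw [h, ← Real.cos_neg (π * ((i : ℝ) - j) / (k + 2))]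
            congr 1
            push_cast
            ring
        have h2 : Real.cos (π * (i + j + 2) / (k + 2)) =
            Real.cos (π * (a + 2 * ((N + 1 : ℕ) : ℤ)) / (k + 2)) := by
          have hb2 : a + 2 * ((N + 1 : ℕ) : ℤ) = b + 2 := by push_cast; omega
          rw [show ((a : ℝ) + 2 * ((N + 1 : ℕ) : ℤ)) = ((b : ℝ) + 2) by
            exact_mod_cast congrArg (Int.cast : ℤ → ℝ) hb2]
          rcases min_cases (i + j) (2 * k - i - j) with ⟨hm, _⟩ | ⟨hm, _⟩
          · rw [hb, hm]; push_cast; ring_nf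
          · rw [hb, hm]
            have hk2 : (k : ℝ) + 2 ≠ 0 := by positivity
            have : π * ((2 * k - i - j : ℤ) + 2) / (k + 2) =
                2 * π - π * (i + j + 2) / (k + 2) := by
              push_cast; field_simp; ring
            rw [this, Real.cos_sub, Real.cos_two_pi, Real.sin_two_pi]
            ring
        rw [h1, h2]
    _ = ∑ n ∈ Finset.range (N + 1),
          (Real.cos (π * (a + 2 * ((n + 1 : ℕ) : ℤ)) / (k + 2)) -
           Real.cos (π * (a + 2 * (n : ℤ)) / (k + 2))) := by
        rw [Finset.sum_range_sub (fun n : ℕ => Real.cos (π * (a + 2 * (n : ℤ)) / (k + 2)))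
          (N + 1)]
    _ = ∑ n ∈ Finset.range (N + 1),
          (Real.cos (π * (((a + 2 * (n : ℤ) : ℤ) : ℝ) + 2) / (k + 2)) -
           Real.cos (π * ((a + 2 * (n : ℤ) : ℤ) : ℝ) / (k + 2))) := by
        refine Finset.sum_congr rfl fun n _ => ?_
        push_cast
        ring_nf
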